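/- Let K be a field of characteristic zero, let G be an abelian group, let g be a finite-dimensional Lie algebra over K, and let (B, η) be a universal coacting bialgebra of g. For bialgebra homomorphisms Φ, Φ' : B → K[G], let (g_σ^Φ)_{σ ∈ G} and (g_σ^{Φ'})_{σ ∈ G} be the corresponding G-gradings, where g_σ^Φ = { x ∈ g | (Φ ⊗ id_g)(η(x)) = σ ⊗ x }. Then the two gradings are isomorphic — i.e., there exists a Lie algebra automorphism φ of g with φ(g_σ^Φ) = g_σ^{Φ'} for all σ ∈ G — if and only if Φ and Φ' are conjugate: there exists a convolution-invertible K-algebra homomorphism u : B → K, with convolution inverse u⁻¹, such that Φ'(b) = Σ u(b₍₁₎) Φ(b₍₂₎) u⁻¹(b₍₃₎) in K[G] for all b ∈ B (viewing the scalars u(b₍₁₎), u⁻¹(b₍₃₎) in K[G] via the unit K → K[G], with Δ_B(b) expanded twice in Sweedler notation). -/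

import Mathlib

set_option maxHeartbeats 1600000
set_option synthInstance.maxHeartbeats 160000


/-!
Statement 11: Let `G` be an abelian group, `g` a finite-dimensional Lie algebra over a field
`K` of characteristic zero, and `(B, η)` a universal coacting bialgebra of `g`. Two bialgebra
homomorphisms `Φ, Φ' : B → K[G]` induce isomorphic `G`-gradings of `g` (i.e. some Lie algebra
automorphism `φ` of `g` maps `g_σ^Φ` onto `g_σ^{Φ'}` for every `σ`) if and only if `Φ` and
`Φ'` are conjugate: `Φ'(b) = Σ u(b₍₁₎) Φ(b₍₂₎) u⁻¹(b₍₃₎)` for some convolution-invertible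
`K`-algebra homomorphism `u : B → K` with convolution inverse `u⁻¹`.
-/

open TensorProduct

universe u

/-- The base-change Lie bracket on `A ⊗[K] g` is `K`-bilinear, so `A ⊗[K] g` is a Lie algebra
over `K` (and not merely over `A`). -/
noncomputable instance baseChangeLieAlgebra {K : Type u} [Field K]
    {A : Type u} [CommRing A] [Algebra K A]
    {L : Type u} [LieRing L] [LieAlgebra K L] : LieAlgebra K (A ⊗[K] L) :=
  { (inferInstance : Module K (A ⊗[K] L)) with
    lie_smul := fun t x y => by
      rw [← algebraMap_smul A t y, lie_smul, algebraMap_smul] }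

/-- `(A, η)` is a universal pair for `(g, h)`. -/
def IsUniversalLiePair (K : Type u) [Field K]
    (g : Type u) [LieRing g] [LieAlgebra K g]
    (h : Type u) [LieRing h] [LieAlgebra K h]
    (A : Type u) [CommRing A] [Algebra K A]
    (η : h →ₗ⁅K⁆ A ⊗[K] g) : Prop :=
  ∀ (C : Type u) [CommRing C] [Algebra K C], ∀ f : h →ₗ⁅K⁆ C ⊗[K] g,
    ∃! Φ : A →ₐ[K] C, ∀ x : h, f x = LinearMap.rTensor g Φ.toLinearMap (η x)

/-- A coaction of a commutative `K`-bialgebra `B` on the Lie algebra `g`. -/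
def IsLieCoaction (K : Type u) [Field K]
    (g : Type u) [LieRing g] [LieAlgebra K g]
    (B : Type u) [CommRing B] [Bialgebra K B]
    (η : g →ₗ⁅K⁆ B ⊗[K] g) : Prop :=
  (∀ x : g, TensorProduct.lid K g
      (LinearMap.rTensor g (Coalgebra.counit (R := K) (A := B)) (η x)) = x) ∧
  ∀ x : g, LinearMap.rTensor g (Coalgebra.comul (R := K) (A := B)) (η x) =
    (TensorProduct.assoc K B B g).symm (LinearMap.lTensor B η.toLinearMap (η x))

/-- The diagonal group-like map `σ ↦ σ ⊗ σ` on the group algebra. -/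
noncomputable def diagMonoidHom (K : Type u) [Field K] (G : Type u) [CommGroup G] :
    G →* MonoidAlgebra K G ⊗[K] MonoidAlgebra K G where
  toFun σ := MonoidAlgebra.of K G σ ⊗ₜ[K] MonoidAlgebra.of K G σ
  map_one' := by
    show MonoidAlgebra.of K G 1 ⊗ₜ[K] MonoidAlgebra.of K G 1 = 1
    rw [map_one, Algebra.TensorProduct.one_def]
  map_mul' σ τ := by
    show MonoidAlgebra.of K G (σ * τ) ⊗ₜ[K] MonoidAlgebra.of K G (σ * τ)
      = (MonoidAlgebra.of K G σ ⊗ₜ[K] MonoidAlgebra.of K G σ) *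
        (MonoidAlgebra.of K G τ ⊗ₜ[K] MonoidAlgebra.of K G τ)
    rw [map_mul, Algebra.TensorProduct.tmul_mul_tmul]

/-- The standard comultiplication of the group algebra `K[G]`. -/
noncomputable def groupComul (K : Type u) [Field K] (G : Type u) [CommGroup G] :
    MonoidAlgebra K G →ₗ[K] MonoidAlgebra K G ⊗[K] MonoidAlgebra K G :=
  (MonoidAlgebra.lift K (MonoidAlgebra K G ⊗[K] MonoidAlgebra K G) G (diagMonoidHom K G)).toLinearMap

/-- The standard counit of the group algebra `K[G]`. -/
noncomputable def groupCounit (K : Type u) [Field K] (G : Type u) [CommGroup G] :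
    MonoidAlgebra K G →ₗ[K] K :=
  (MonoidAlgebra.lift K K G (1 : G →* K)).toLinearMap

/-- A bialgebra homomorphism from a commutative `K`-bialgebra `B` to the group algebra
`K[G]` with its standard Hopf algebra structure. -/
structure BialgHomToGroupAlgebra (K : Type u) [Field K] (G : Type u) [CommGroup G]
    (B : Type u) [CommRing B] [Bialgebra K B] : Type u where
  toAlgHom : B →ₐ[K] MonoidAlgebra K G
  counit_comp : ∀ b : B, groupCounit K G (toAlgHom b) = Coalgebra.counit (R := K) (A := B) b
  comul_comp : ∀ b : B, groupComul K G (toAlgHom b) =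
    TensorProduct.map toAlgHom.toLinearMap toAlgHom.toLinearMap
      (Coalgebra.comul (R := K) (A := B) b)

/-- The `σ`-homogeneous component `{ x | (Φ ⊗ id)(η x) = σ ⊗ x }` of the grading of `g`
associated to `Φ : B → K[G]`. -/
noncomputable def lieGrade {K : Type u} [Field K] {G : Type u} [CommGroup G]
    {g : Type u} [LieRing g] [LieAlgebra K g]
    {B : Type u} [CommRing B] [Bialgebra K B]
    (η : g →ₗ⁅K⁆ B ⊗[K] g) (Φ : B →ₐ[K] MonoidAlgebra K G) (σ : G) : Submodule K g :=
  LinearMap.ker (LinearMap.rTensor g Φ.toLinearMap ∘ₗ η.toLinearMap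
    - TensorProduct.mk K (MonoidAlgebra K G) g (MonoidAlgebra.of K G σ))

/-- The convolution product `Φ₁ ⋆ Φ₂` of two `K`-algebra homomorphisms `B → K`. -/
noncomputable def conv {K : Type u} [Field K] {B : Type u} [CommRing B] [Bialgebra K B]
    (Φ₁ Φ₂ : B →ₐ[K] K) : B →ₗ[K] K :=
  LinearMap.mul' K K ∘ₗ TensorProduct.map Φ₁.toLinearMap Φ₂.toLinearMap ∘ₗ
    Coalgebra.comul (R := K) (A := B)

/-- `b ↦ Σ u(b₍₁₎) Φ(b₍₂₎) v(b₍₃₎)`: the conjugate of `Φ : B → K[G]` by the functionals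
`u, v : B → K`, as a linear map `B → K[G]`. -/
noncomputable def conjugateMap {K : Type u} [Field K] {G : Type u} [CommGroup G]
    {B : Type u} [CommRing B] [Bialgebra K B]
    (u v : B →ₐ[K] K) (Φ : B →ₐ[K] MonoidAlgebra K G) : B →ₗ[K] MonoidAlgebra K G :=
  (TensorProduct.rid K (MonoidAlgebra K G)).toLinearMap ∘ₗ
    LinearMap.rTensor K (TensorProduct.lid K (MonoidAlgebra K G)).toLinearMap ∘ₗ
    TensorProduct.map (TensorProduct.map u.toLinearMap Φ.toLinearMap) v.toLinearMap ∘ₗ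
    LinearMap.rTensor B (Coalgebra.comul (R := K) (A := B)) ∘ₗ
    Coalgebra.comul (R := K) (A := B)


/-! ### Auxiliary machinery -/

namespace Statement11Aux

open LinearMap

variable {K : Type u} [Field K]
variable {g : Type u} [LieRing g] [LieAlgebra K g]

section LieMaps

variable {B : Type u} [CommRing B] [Algebra K B]
variable {C : Type u} [CommRing C] [Algebra K C]

/-- `rTensor` of an algebra homomorphism, as a Lie algebra homomorphism. -/
noncomputable def rTensorLieHom (Ψ : B →ₐ[K] C) : B ⊗[K] g →ₗ⁅K⁆ C ⊗[K] g :=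
  { LinearMap.rTensor g Ψ.toLinearMap with
    map_lie' := by
      intro s t
      show LinearMap.rTensor g Ψ.toLinearMap ⁅s, t⁆ =
        ⁅LinearMap.rTensor g Ψ.toLinearMap s, LinearMap.rTensor g Ψ.toLinearMap t⁆
      induction s using TensorProduct.induction_on with
      | zero => simp
      | tmul a x =>
        induction t using TensorProduct.induction_on with
        | zero => simp
        | tmul b y =>
          simp only [LieAlgebra.ExtendScalars.bracket_tmul, LinearMap.rTensor_tmul,
            AlgHom.toLinearMap_apply, map_mul]
        | add t₁ t₂ h₁ h₂ => simp only [lie_add, map_add, h₁, h₂]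
      | add s₁ s₂ h₁ h₂ => simp only [add_lie, map_add, h₁, h₂] }

@[simp] theorem rTensorLieHom_apply (Ψ : B →ₐ[K] C) (t : B ⊗[K] g) :
    rTensorLieHom (g := g) Ψ t = LinearMap.rTensor g Ψ.toLinearMap t := rfl

/-- `TensorProduct.lid` as a Lie algebra homomorphism. -/
noncomputable def lidLieHom : (K ⊗[K] g) →ₗ⁅K⁆ g :=
  { (TensorProduct.lid K g).toLinearMap with
    map_lie' := by
      intro s t
      show TensorProduct.lid K g ⁅s, t⁆ = ⁅TensorProduct.lid K g s, TensorProduct.lid K g t⁆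
      induction s using TensorProduct.induction_on with
      | zero =>
        have h0 : ⁅(0 : K ⊗[K] g), t⁆ = (0 : K ⊗[K] g) := zero_lie t
        simp [h0]
      | tmul a x =>
        induction t using TensorProduct.induction_on with
        | zero =>
          have h0 : ⁅a ⊗ₜ[K] x, (0 : K ⊗[K] g)⁆ = (0 : K ⊗[K] g) := lie_zero (L := K ⊗[K] g) (M := K ⊗[K] g) _
          simp [h0]
        | tmul b y =>
          simp only [LieAlgebra.ExtendScalars.bracket_tmul, TensorProduct.lid_tmul]
          rw [smul_lie, lie_smul, smul_smul, mul_comm]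
        | add t₁ t₂ h₁ h₂ =>
          have ha : ⁅a ⊗ₜ[K] x, t₁ + t₂⁆ = ⁅a ⊗ₜ[K] x, t₁⁆ + ⁅a ⊗ₜ[K] x, t₂⁆ := lie_add (L := K ⊗[K] g) (M := K ⊗[K] g) _ _ _
          simp [ha, h₁, h₂]
      | add s₁ s₂ h₁ h₂ =>
        have ha : ⁅s₁ + s₂, t⁆ = ⁅s₁, t⁆ + ⁅s₂, t⁆ := add_lie (L := K ⊗[K] g) (M := K ⊗[K] g) _ _ _
        simp [ha, h₁, h₂] }

@[simp] theorem lidLieHom_apply (t : K ⊗[K] g) :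
    lidLieHom (K := K) (g := g) t = TensorProduct.lid K g t := rfl

/-- `x ↦ 1 ⊗ₜ x` as a Lie algebra homomorphism. -/
noncomputable def oneTmulLie : g →ₗ⁅K⁆ K ⊗[K] g :=
  { TensorProduct.mk K K g 1 with
    map_lie' := by
      intro x y
      show (1 : K) ⊗ₜ[K] ⁅x, y⁆ = ⁅(1 : K) ⊗ₜ[K] x, (1 : K) ⊗ₜ[K] y⁆
      rw [LieAlgebra.ExtendScalars.bracket_tmul, one_mul] }

@[simp] theorem oneTmulLie_apply (x : g) : oneTmulLie (K := K) x = (1 : K) ⊗ₜ[K] x := rfl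

/-- Uniqueness part of the universal property, as an extensionality principle for algebra
homomorphisms out of `B`. -/
theorem univ_alghom_ext (η : g →ₗ⁅K⁆ B ⊗[K] g)
    (huniv : IsUniversalLiePair K g g B η)
    (Ψ₁ Ψ₂ : B →ₐ[K] C)
    (h : ∀ x, LinearMap.rTensor g Ψ₁.toLinearMap (η x) =
      LinearMap.rTensor g Ψ₂.toLinearMap (η x)) : Ψ₁ = Ψ₂ := by
  obtain ⟨Ψ₀, -, huniq⟩ := huniv C ((rTensorLieHom Ψ₁).comp η)
  have h1 : Ψ₁ = Ψ₀ := huniq Ψ₁ fun x => rfl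
  have h2 : Ψ₂ = Ψ₀ := huniq Ψ₂ fun x => by exact h x
  rw [h1, h2]

end LieMaps

section Psi

variable {B : Type u} [CommRing B] [Algebra K B]

/-- `x ↦ (w ⊗ id)(η x)` viewed in `g`. -/
noncomputable def psiMap (η : g →ₗ⁅K⁆ B ⊗[K] g) (w : B →ₗ[K] K) : g →ₗ[K] g :=
  (TensorProduct.lid K g).toLinearMap ∘ₗ LinearMap.rTensor g w ∘ₗ (η : g →ₗ[K] B ⊗[K] g)

theorem psiMap_apply (η : g →ₗ⁅K⁆ B ⊗[K] g) (w : B →ₗ[K] K) (x : g) :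
    psiMap η w x = TensorProduct.lid K g (LinearMap.rTensor g w (η x)) := rfl

/-- Maps acting on different tensor legs commute (version for `lid∘rTensor`). -/
theorem interchange1 {N P : Type u} [AddCommGroup N] [Module K N] [AddCommGroup P] [Module K P]
    (w : B →ₗ[K] K) (F : N →ₗ[K] P) (t : B ⊗[K] N) :
    F (TensorProduct.lid K N (LinearMap.rTensor N w t)) =
      TensorProduct.lid K P (LinearMap.rTensor P w (LinearMap.lTensor B F t)) := by
  induction t using TensorProduct.induction_on with
  | zero => simp
  | tmul a n => simp
  | add t₁ t₂ h₁ h₂ => simp only [map_add, h₁, h₂]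

theorem lid_naturality {N P : Type u} [AddCommGroup N] [Module K N] [AddCommGroup P] [Module K P]
    (F : N →ₗ[K] P) (s : K ⊗[K] N) :
    F (TensorProduct.lid K N s) = TensorProduct.lid K P (LinearMap.lTensor K F s) := by
  induction s using TensorProduct.induction_on with
  | zero => simp
  | tmul a n => simp
  | add s₁ s₂ h₁ h₂ => simp only [map_add, h₁, h₂]

end Psi


section Sweedler

variable {B : Type u} [CommRing B] [Bialgebra K B]

/-- Maps acting on complementary tensor legs commute. -/
theorem tensor_comm_legs {A₁ A₂ N₁ N₂ : Type u}
    [AddCommGroup A₁] [Module K A₁] [AddCommGroup A₂] [Module K A₂]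
    [AddCommGroup N₁] [Module K N₁] [AddCommGroup N₂] [Module K N₂]
    (f : A₁ →ₗ[K] A₂) (h : N₁ →ₗ[K] N₂) (t : A₁ ⊗[K] N₁) :
    LinearMap.lTensor A₂ h (LinearMap.rTensor N₁ f t) =
      LinearMap.rTensor N₂ f (LinearMap.lTensor A₁ h t) := by
  induction t using TensorProduct.induction_on with
  | zero => simp
  | tmul a n => simp
  | add t₁ t₂ h₁ h₂ => simp only [map_add, h₁, h₂]

theorem convP (u v : B →ₗ[K] K) (s : B ⊗[K] (B ⊗[K] g)) :
    TensorProduct.lid K g (LinearMap.rTensor g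
        (LinearMap.mul' K K ∘ₗ TensorProduct.map u v) ((TensorProduct.assoc K B B g).symm s)) =
      TensorProduct.lid K g (LinearMap.rTensor g v
        (TensorProduct.lid K (B ⊗[K] g) (LinearMap.rTensor (B ⊗[K] g) u s))) := by
  induction s using TensorProduct.induction_on with
  | zero => simp
  | tmul a t =>
    induction t using TensorProduct.induction_on with
    | zero => simp
    | tmul b x =>
      simp [smul_smul, TensorProduct.smul_tmul']
    | add t₁ t₂ h₁ h₂ =>
      simp only [TensorProduct.tmul_add, map_add, h₁, h₂]
  | add s₁ s₂ h₁ h₂ => simp only [map_add, h₁, h₂]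

theorem P1 {D : Type u} [AddCommGroup D] [Module K D] (f : B →ₗ[K] D)
    (s : B ⊗[K] (B ⊗[K] g)) :
    LinearMap.rTensor g (LinearMap.rTensor B f) ((TensorProduct.assoc K B B g).symm s) =
      (TensorProduct.assoc K D B g).symm (LinearMap.rTensor (B ⊗[K] g) f s) := by
  induction s using TensorProduct.induction_on with
  | zero => simp
  | tmul a t =>
    induction t using TensorProduct.induction_on with
    | zero => simp
    | tmul b x => simp [TensorProduct.assoc_symm_tmul]
    | add t₁ t₂ h₁ h₂ => simp only [TensorProduct.tmul_add, map_add, h₁, h₂]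
  | add s₁ s₂ h₁ h₂ => simp only [map_add, h₁, h₂]

theorem A1 {N : Type u} [AddCommGroup N] [Module K N] (f : g →ₗ[K] N)
    (s : B ⊗[K] (B ⊗[K] g)) :
    LinearMap.lTensor (B ⊗[K] B) f ((TensorProduct.assoc K B B g).symm s) =
      (TensorProduct.assoc K B B N).symm
        (LinearMap.lTensor B (LinearMap.lTensor B f) s) := by
  induction s using TensorProduct.induction_on with
  | zero => simp
  | tmul a t =>
    induction t using TensorProduct.induction_on with
    | zero => simp
    | tmul b x => simp [TensorProduct.assoc_symm_tmul]
    | add t₁ t₂ h₁ h₂ => simp only [TensorProduct.tmul_add, map_add, h₁, h₂]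
  | add s₁ s₂ h₁ h₂ => simp only [map_add, h₁, h₂]

theorem monoLemma {M' : Type u} [AddCommGroup M'] [Module K M']
    (u v : B →ₗ[K] K) (Φl : B →ₗ[K] M') (s : B ⊗[K] (B ⊗[K] (B ⊗[K] g))) :
    LinearMap.rTensor g (TensorProduct.rid K M').toLinearMap
      (LinearMap.rTensor g (LinearMap.rTensor K (TensorProduct.lid K M').toLinearMap)
        (LinearMap.rTensor g (TensorProduct.map (TensorProduct.map u Φl) v)
          ((TensorProduct.assoc K (B ⊗[K] B) B g).symm
            ((TensorProduct.assoc K B B (B ⊗[K] g)).symm s)))) =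
      LinearMap.lTensor M' ((TensorProduct.lid K g).toLinearMap ∘ₗ LinearMap.rTensor g v)
        (LinearMap.rTensor (B ⊗[K] g) Φl
          (TensorProduct.lid K (B ⊗[K] (B ⊗[K] g))
            (LinearMap.rTensor (B ⊗[K] (B ⊗[K] g)) u s))) := by
  induction s using TensorProduct.induction_on with
  | zero => simp
  | tmul a t =>
    induction t using TensorProduct.induction_on with
    | zero => simp
    | tmul b r =>
      induction r using TensorProduct.induction_on with
      | zero => simp
      | tmul c x =>
        simp [TensorProduct.assoc_symm_tmul, TensorProduct.smul_tmul', smul_smul, mul_comm]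
      | add r₁ r₂ h₁ h₂ =>
        simp only [TensorProduct.tmul_add, map_add, h₁, h₂]
    | add t₁ t₂ h₁ h₂ => simp only [TensorProduct.tmul_add, map_add, h₁, h₂]
  | add s₁ s₂ h₁ h₂ => simp only [map_add, h₁, h₂]

variable (η : g →ₗ⁅K⁆ B ⊗[K] g)

/-- The convolution of two functionals, evaluated through the coaction. -/
theorem conv_eta
    (hco2 : ∀ x : g, LinearMap.rTensor g (Coalgebra.comul (R := K) (A := B)) (η x) =
      (TensorProduct.assoc K B B g).symm (LinearMap.lTensor B η.toLinearMap (η x)))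
    (u v : B →ₐ[K] K) (x : g) :
    TensorProduct.lid K g (LinearMap.rTensor g (conv u v) (η x)) =
      psiMap η v.toLinearMap (psiMap η u.toLinearMap x) := by
  have e0 : (conv u v : B →ₗ[K] K) =
      (LinearMap.mul' K K ∘ₗ TensorProduct.map u.toLinearMap v.toLinearMap) ∘ₗ
        (Coalgebra.comul (R := K) (A := B)) := rfl
  rw [e0, LinearMap.rTensor_comp, LinearMap.comp_apply, hco2 x, convP]
  have r1 : η.toLinearMap (TensorProduct.lid K g
        (LinearMap.rTensor g u.toLinearMap (η x))) =
      TensorProduct.lid K (B ⊗[K] g) (LinearMap.rTensor (B ⊗[K] g) u.toLinearMap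
        (LinearMap.lTensor B η.toLinearMap (η x))) :=
    interchange1 u.toLinearMap η.toLinearMap (η x)
  rw [← r1]
  rfl

/-- The conjugate map, evaluated through the coaction. -/
theorem conj_eta {G : Type u} [CommGroup G]
    (hco2 : ∀ x : g, LinearMap.rTensor g (Coalgebra.comul (R := K) (A := B)) (η x) =
      (TensorProduct.assoc K B B g).symm (LinearMap.lTensor B η.toLinearMap (η x)))
    (u v : B →ₐ[K] K) (Φ : B →ₐ[K] MonoidAlgebra K G) (x : g) :
    LinearMap.rTensor g (conjugateMap u v Φ) (η x) =
      LinearMap.lTensor (MonoidAlgebra K G) (psiMap η v.toLinearMap)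
        (LinearMap.rTensor g Φ.toLinearMap (η (psiMap η u.toLinearMap x))) := by
  -- left-hand side
  have e0 : (conjugateMap u v Φ : B →ₗ[K] MonoidAlgebra K G) =
      (TensorProduct.rid K (MonoidAlgebra K G)).toLinearMap ∘ₗ
        ((LinearMap.rTensor K (TensorProduct.lid K (MonoidAlgebra K G)).toLinearMap) ∘ₗ
          ((TensorProduct.map (TensorProduct.map u.toLinearMap Φ.toLinearMap) v.toLinearMap) ∘ₗ
            ((LinearMap.rTensor B (Coalgebra.comul (R := K) (A := B))) ∘ₗ
              (Coalgebra.comul (R := K) (A := B))))) := rfl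
  rw [e0]
  simp only [LinearMap.rTensor_comp, LinearMap.comp_apply]
  rw [hco2 x, P1, ← tensor_comm_legs (Coalgebra.comul (R := K) (A := B)) η.toLinearMap (η x),
    hco2 x, A1, monoLemma]
  -- right-hand side
  have r1 : η.toLinearMap (TensorProduct.lid K g
        (LinearMap.rTensor g u.toLinearMap (η x))) =
      TensorProduct.lid K (B ⊗[K] g) (LinearMap.rTensor (B ⊗[K] g) u.toLinearMap
        (LinearMap.lTensor B η.toLinearMap (η x))) :=
    interchange1 u.toLinearMap η.toLinearMap (η x)
  have r2 : η (psiMap η u.toLinearMap x) = TensorProduct.lid K (B ⊗[K] g)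
      (LinearMap.rTensor (B ⊗[K] g) u.toLinearMap
        (LinearMap.lTensor B η.toLinearMap (η x))) := r1
  have r3 : psiMap η v.toLinearMap =
      ((TensorProduct.lid K g).toLinearMap ∘ₗ LinearMap.rTensor g v.toLinearMap) ∘ₗ
        η.toLinearMap := rfl
  have q0 : LinearMap.lTensor (MonoidAlgebra K G) (psiMap η v.toLinearMap) =
      LinearMap.lTensor (MonoidAlgebra K G) (TensorProduct.lid K g).toLinearMap ∘ₗ
        LinearMap.lTensor (MonoidAlgebra K G) (LinearMap.rTensor g v.toLinearMap) ∘ₗ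
          LinearMap.lTensor (MonoidAlgebra K G) η.toLinearMap := by
    rw [r3, LinearMap.lTensor_comp, LinearMap.lTensor_comp]
    rfl
  rw [r2, q0, LinearMap.comp_apply, LinearMap.comp_apply,
    tensor_comm_legs Φ.toLinearMap η.toLinearMap,
    lid_naturality (LinearMap.lTensor B η.toLinearMap),
    tensor_comm_legs u.toLinearMap (LinearMap.lTensor B η.toLinearMap)]
  simp only [LinearMap.lTensor_comp, LinearMap.comp_apply]

end Sweedler


section AlgebraHoms

variable {B : Type u} [CommRing B] [Bialgebra K B]

/-- The convolution of two algebra maps `B → K`, as an algebra map. -/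
noncomputable def convAlgHom (u v : B →ₐ[K] K) : B →ₐ[K] K :=
  (Algebra.TensorProduct.lift u v fun _ _ => Commute.all _ _).comp (Bialgebra.comulAlgHom K B)

theorem convAlgHom_apply (u v : B →ₐ[K] K) (b : B) :
    convAlgHom u v b = conv u v b := by
  have key : ∀ t : B ⊗[K] B,
      Algebra.TensorProduct.lift u v (fun _ _ => Commute.all _ _) t =
        LinearMap.mul' K K (TensorProduct.map u.toLinearMap v.toLinearMap t) := by
    intro t
    induction t using TensorProduct.induction_on with
    | zero => simp
    | tmul a c => simp
    | add t₁ t₂ h₁ h₂ => simp only [map_add, h₁, h₂]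
  show Algebra.TensorProduct.lift u v (fun _ _ => Commute.all _ _)
      (Bialgebra.comulAlgHom K B b) = _
  rw [key, Bialgebra.comulAlgHom_apply]
  rfl

variable {G : Type u} [CommGroup G]

/-- The triple convolution `u ⋆ Φ ⋆ v`, as an algebra map. -/
noncomputable def conjAlgHom (u v : B →ₐ[K] K) (Φ : B →ₐ[K] MonoidAlgebra K G) :
    B →ₐ[K] MonoidAlgebra K G :=
  ((Algebra.TensorProduct.lift
      (Algebra.TensorProduct.lift ((Algebra.ofId K (MonoidAlgebra K G)).comp u) Φ
        fun _ _ => Commute.all _ _)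
      ((Algebra.ofId K (MonoidAlgebra K G)).comp v) fun _ _ => Commute.all _ _).comp
    ((Algebra.TensorProduct.map (Bialgebra.comulAlgHom K B) (AlgHom.id K B)).comp
      (Bialgebra.comulAlgHom K B)))

theorem conjAlgHom_apply (u v : B →ₐ[K] K) (Φ : B →ₐ[K] MonoidAlgebra K G) (b : B) :
    conjAlgHom u v Φ b = conjugateMap u v Φ b := by
  have key2 : ∀ (s : B ⊗[K] B) (c : B),
      (Algebra.TensorProduct.lift
        (Algebra.TensorProduct.lift ((Algebra.ofId K (MonoidAlgebra K G)).comp u) Φ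
          fun _ _ => Commute.all _ _)
        ((Algebra.ofId K (MonoidAlgebra K G)).comp v) fun _ _ => Commute.all _ _)
        (s ⊗ₜ[K] c) =
      TensorProduct.rid K (MonoidAlgebra K G)
        (LinearMap.rTensor K (TensorProduct.lid K (MonoidAlgebra K G)).toLinearMap
          (TensorProduct.map (TensorProduct.map u.toLinearMap Φ.toLinearMap) v.toLinearMap
            (s ⊗ₜ[K] c))) := by
    intro s c
    induction s using TensorProduct.induction_on with
    | zero => simp
    | tmul a₁ a₂ =>
      simp [Algebra.TensorProduct.lift_tmul, Algebra.ofId_apply, Algebra.smul_def,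
        TensorProduct.smul_tmul', mul_comm, mul_left_comm]
    | add s₁ s₂ h₁ h₂ =>
      simp only [TensorProduct.add_tmul, map_add, h₁, h₂]
  have key : ∀ t : B ⊗[K] B,
      (Algebra.TensorProduct.lift
        (Algebra.TensorProduct.lift ((Algebra.ofId K (MonoidAlgebra K G)).comp u) Φ
          fun _ _ => Commute.all _ _)
        ((Algebra.ofId K (MonoidAlgebra K G)).comp v) fun _ _ => Commute.all _ _)
        (Algebra.TensorProduct.map (Bialgebra.comulAlgHom K B) (AlgHom.id K B) t) =
      TensorProduct.rid K (MonoidAlgebra K G)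
        (LinearMap.rTensor K (TensorProduct.lid K (MonoidAlgebra K G)).toLinearMap
          (TensorProduct.map (TensorProduct.map u.toLinearMap Φ.toLinearMap) v.toLinearMap
            (LinearMap.rTensor B (Coalgebra.comul (R := K) (A := B)) t))) := by
    intro t
    induction t using TensorProduct.induction_on with
    | zero => simp
    | tmul a c =>
      rw [Algebra.TensorProduct.map_tmul, LinearMap.rTensor_tmul]
      rw [show Bialgebra.comulAlgHom K B a = Coalgebra.comul (R := K) (A := B) a from rfl]
        at *
      exact key2 (Coalgebra.comul (R := K) (A := B) a) c
    | add t₁ t₂ h₁ h₂ => simp only [map_add, h₁, h₂]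
  show (Algebra.TensorProduct.lift
        (Algebra.TensorProduct.lift ((Algebra.ofId K (MonoidAlgebra K G)).comp u) Φ
          fun _ _ => Commute.all _ _)
        ((Algebra.ofId K (MonoidAlgebra K G)).comp v) fun _ _ => Commute.all _ _)
      (Algebra.TensorProduct.map (Bialgebra.comulAlgHom K B) (AlgHom.id K B)
        (Bialgebra.comulAlgHom K B b)) = _
  rw [key, Bialgebra.comulAlgHom_apply]
  rfl

end AlgebraHoms

section Grading

variable {B : Type u} [CommRing B] [Bialgebra K B]
variable {G : Type u} [CommGroup G]
variable (η : g →ₗ⁅K⁆ B ⊗[K] g)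

theorem mem_lieGrade (Φ : B →ₐ[K] MonoidAlgebra K G) (σ : G) (x : g) :
    x ∈ lieGrade η Φ σ ↔
      LinearMap.rTensor g Φ.toLinearMap (η x) = MonoidAlgebra.of K G σ ⊗ₜ[K] x := by
  rw [lieGrade, LinearMap.mem_ker, LinearMap.sub_apply, sub_eq_zero, LinearMap.comp_apply]
  rfl

/-- The coefficient functional on the group algebra. -/
noncomputable def coeffL (σ : G) : MonoidAlgebra K G →ₗ[K] K where
  toFun c := c.coeff σ
  map_add' _ _ := rfl
  map_smul' _ _ := rfl

theorem coeffL_apply (σ : G) (c : MonoidAlgebra K G) : coeffL (K := K) σ c = c.coeff σ := rfl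

theorem P4 {C₁ C₂ : Type u} [AddCommGroup C₁] [Module K C₁] [AddCommGroup C₂] [Module K C₂]
    (f : B →ₗ[K] C₁) (h : B →ₗ[K] C₂) (s : B ⊗[K] (B ⊗[K] g)) :
    LinearMap.rTensor g (TensorProduct.map f h) ((TensorProduct.assoc K B B g).symm s) =
      (TensorProduct.assoc K C₁ C₂ g).symm
        (TensorProduct.map f (LinearMap.rTensor g h) s) := by
  induction s using TensorProduct.induction_on with
  | zero => simp
  | tmul a t =>
    induction t using TensorProduct.induction_on with
    | zero => simp
    | tmul b x => simp [TensorProduct.assoc_symm_tmul]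
    | add t₁ t₂ h₁ h₂ => simp only [TensorProduct.tmul_add, map_add, h₁, h₂]
  | add s₁ s₂ h₁ h₂ => simp only [map_add, h₁, h₂]

theorem P5 {C₁ N P : Type u} [AddCommGroup C₁] [Module K C₁] [AddCommGroup N] [Module K N]
    [AddCommGroup P] [Module K P]
    (f : B →ₗ[K] C₁) (F : g →ₗ[K] N) (X : N →ₗ[K] P) (t : B ⊗[K] g) :
    TensorProduct.map f X (LinearMap.lTensor B F t) =
      LinearMap.lTensor C₁ (X ∘ₗ F) (LinearMap.rTensor g f t) := by
  induction t using TensorProduct.induction_on with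
  | zero => simp
  | tmul a x => simp
  | add t₁ t₂ h₁ h₂ => simp only [map_add, h₁, h₂]

theorem G1 (σ : G) (c : MonoidAlgebra K G) :
    TensorProduct.lid K (MonoidAlgebra K G)
        (LinearMap.rTensor (MonoidAlgebra K G) (coeffL σ) (groupComul K G c)) =
      coeffL σ c • MonoidAlgebra.of K G σ := by
  induction c using MonoidAlgebra.induction_linear with
  | zero => simp
  | add f h hf hh =>
    rw [map_add, map_add, map_add, hf, hh, map_add, add_smul]
  | single τ a =>
    have hc : groupComul K G (MonoidAlgebra.single τ a) =
        a • (MonoidAlgebra.of K G τ ⊗ₜ[K] MonoidAlgebra.of K G τ) := by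
      rw [groupComul]
      rw [show ((MonoidAlgebra.lift K (MonoidAlgebra K G ⊗[K] MonoidAlgebra K G) G
          (diagMonoidHom K G)).toLinearMap (MonoidAlgebra.single τ a)) =
        (MonoidAlgebra.lift K (MonoidAlgebra K G ⊗[K] MonoidAlgebra K G) G
          (diagMonoidHom K G)) (MonoidAlgebra.single τ a) from rfl]
      rw [MonoidAlgebra.lift_single]
      rfl
    rw [hc, map_smul, map_smul]
    by_cases hτ : τ = σ
    · subst hτ
      rw [LinearMap.rTensor_tmul, TensorProduct.lid_tmul]
      have h1 : coeffL (K := K) τ (MonoidAlgebra.of K G τ) = 1 := by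
        simp [coeffL_apply, MonoidAlgebra.of_apply, MonoidAlgebra.coeff_single_apply]
      have h2 : coeffL (K := K) τ (MonoidAlgebra.single τ a) = a := by
        simp [coeffL_apply, MonoidAlgebra.coeff_single_apply]
      rw [h1, h2, one_smul]
    · have h1 : coeffL (K := K) σ (MonoidAlgebra.of K G τ) = 0 := by
        simp [coeffL_apply, MonoidAlgebra.of_apply, MonoidAlgebra.coeff_single_apply, hτ]
      have h2 : coeffL (K := K) σ (MonoidAlgebra.single τ a) = 0 := by
        simp [coeffL_apply, MonoidAlgebra.coeff_single_apply, hτ]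
      rw [LinearMap.rTensor_tmul, h1, h2, TensorProduct.zero_tmul, map_zero, smul_zero,
        zero_smul]

theorem G2 {M' : Type u} [AddCommGroup M'] [Module K M'] (m : M') (t : K ⊗[K] g) :
    LinearMap.rTensor g (LinearMap.toSpanSingleton K M' m) t =
      m ⊗ₜ[K] TensorProduct.lid K g t := by
  induction t using TensorProduct.induction_on with
  | zero => simp
  | tmul a x =>
    rw [LinearMap.rTensor_tmul, TensorProduct.lid_tmul, LinearMap.toSpanSingleton_apply,
      TensorProduct.smul_tmul]
  | add t₁ t₂ h₁ h₂ => rw [map_add, map_add, h₁, h₂, TensorProduct.tmul_add]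

theorem G3 {A A' : Type u} [AddCommGroup A] [Module K A] [AddCommGroup A'] [Module K A']
    (w : A →ₗ[K] K) (s : A ⊗[K] (A' ⊗[K] g)) :
    LinearMap.rTensor g ((TensorProduct.lid K A').toLinearMap ∘ₗ LinearMap.rTensor A' w)
        ((TensorProduct.assoc K A A' g).symm s) =
      TensorProduct.lid K (A' ⊗[K] g) (LinearMap.rTensor (A' ⊗[K] g) w s) := by
  induction s using TensorProduct.induction_on with
  | zero => simp
  | tmul a t =>
    induction t using TensorProduct.induction_on with
    | zero => simp
    | tmul a' x =>
      simp [TensorProduct.assoc_symm_tmul, TensorProduct.smul_tmul']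
    | add t₁ t₂ h₁ h₂ => simp only [TensorProduct.tmul_add, map_add, h₁, h₂]
  | add s₁ s₂ h₁ h₂ => simp only [map_add, h₁, h₂]

/-- Each component of the coaction lies in the corresponding homogeneous piece. -/
theorem component_mem
    (hco2 : ∀ x : g, LinearMap.rTensor g (Coalgebra.comul (R := K) (A := B)) (η x) =
      (TensorProduct.assoc K B B g).symm (LinearMap.lTensor B η.toLinearMap (η x)))
    (Φ : BialgHomToGroupAlgebra K G B) (σ : G) (x : g) :
    TensorProduct.lid K g (LinearMap.rTensor g (coeffL σ)
        (LinearMap.rTensor g Φ.toAlgHom.toLinearMap (η x))) ∈ lieGrade η Φ.toAlgHom σ := by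
  set M := MonoidAlgebra K G
  set Φl := Φ.toAlgHom.toLinearMap with hΦl
  have hcomul : groupComul K G ∘ₗ Φl = TensorProduct.map Φl Φl ∘ₗ
      (Coalgebra.comul (R := K) (A := B)) := LinearMap.ext Φ.comul_comp
  have hρco : LinearMap.rTensor g (groupComul K G) (LinearMap.rTensor g Φl (η x)) =
      (TensorProduct.assoc K M M g).symm
        (LinearMap.lTensor M (LinearMap.rTensor g Φl ∘ₗ η.toLinearMap)
          (LinearMap.rTensor g Φl (η x))) := by
    calc LinearMap.rTensor g (groupComul K G) (LinearMap.rTensor g Φl (η x))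
        = LinearMap.rTensor g (groupComul K G ∘ₗ Φl) (η x) :=
          (LinearMap.rTensor_comp_apply g _ _ (η x)).symm
      _ = LinearMap.rTensor g (TensorProduct.map Φl Φl ∘ₗ
            (Coalgebra.comul (R := K) (A := B))) (η x) := by rw [hcomul]
      _ = LinearMap.rTensor g (TensorProduct.map Φl Φl)
            (LinearMap.rTensor g (Coalgebra.comul (R := K) (A := B)) (η x)) :=
          LinearMap.rTensor_comp_apply g _ _ (η x)
      _ = LinearMap.rTensor g (TensorProduct.map Φl Φl)
            ((TensorProduct.assoc K B B g).symm
              (LinearMap.lTensor B η.toLinearMap (η x))) := by rw [hco2 x]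
      _ = (TensorProduct.assoc K M M g).symm
            (TensorProduct.map Φl (LinearMap.rTensor g Φl)
              (LinearMap.lTensor B η.toLinearMap (η x))) := P4 Φl Φl _
      _ = (TensorProduct.assoc K M M g).symm
            (LinearMap.lTensor M (LinearMap.rTensor g Φl ∘ₗ η.toLinearMap)
              (LinearMap.rTensor g Φl (η x))) := by
          rw [P5 Φl η.toLinearMap (LinearMap.rTensor g Φl)]
  have happ := congrArg (LinearMap.rTensor g
      ((TensorProduct.lid K M).toLinearMap ∘ₗ LinearMap.rTensor M (coeffL σ))) hρco
  -- massage the left-hand side of happ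
  have hL : LinearMap.rTensor g
        ((TensorProduct.lid K M).toLinearMap ∘ₗ LinearMap.rTensor M (coeffL σ))
        (LinearMap.rTensor g (groupComul K G) (LinearMap.rTensor g Φl (η x))) =
      MonoidAlgebra.of K G σ ⊗ₜ[K]
        TensorProduct.lid K g (LinearMap.rTensor g (coeffL σ)
          (LinearMap.rTensor g Φl (η x))) := by
    have e1 : ((TensorProduct.lid K M).toLinearMap ∘ₗ LinearMap.rTensor M (coeffL σ)) ∘ₗ
        groupComul K G =
        LinearMap.toSpanSingleton K M (MonoidAlgebra.of K G σ) ∘ₗ coeffL σ := by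
      apply LinearMap.ext
      intro c
      simp only [LinearMap.comp_apply, LinearMap.toSpanSingleton_apply,
        LinearEquiv.coe_coe]
      exact G1 σ c
    calc LinearMap.rTensor g
          ((TensorProduct.lid K M).toLinearMap ∘ₗ LinearMap.rTensor M (coeffL σ))
          (LinearMap.rTensor g (groupComul K G) (LinearMap.rTensor g Φl (η x)))
        = LinearMap.rTensor g
            (((TensorProduct.lid K M).toLinearMap ∘ₗ LinearMap.rTensor M (coeffL σ)) ∘ₗ
              groupComul K G) (LinearMap.rTensor g Φl (η x)) :=
          (LinearMap.rTensor_comp_apply g _ _ _).symm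
      _ = LinearMap.rTensor g
            (LinearMap.toSpanSingleton K M (MonoidAlgebra.of K G σ) ∘ₗ coeffL σ)
            (LinearMap.rTensor g Φl (η x)) := by rw [e1]
      _ = LinearMap.rTensor g (LinearMap.toSpanSingleton K M (MonoidAlgebra.of K G σ))
            (LinearMap.rTensor g (coeffL σ) (LinearMap.rTensor g Φl (η x))) :=
          LinearMap.rTensor_comp_apply g _ _ _
      _ = _ := G2 _ _
  -- massage the right-hand side of happ
  have hR : LinearMap.rTensor g
        ((TensorProduct.lid K M).toLinearMap ∘ₗ LinearMap.rTensor M (coeffL σ))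
        ((TensorProduct.assoc K M M g).symm
          (LinearMap.lTensor M (LinearMap.rTensor g Φl ∘ₗ η.toLinearMap)
            (LinearMap.rTensor g Φl (η x)))) =
      (LinearMap.rTensor g Φl ∘ₗ η.toLinearMap)
        (TensorProduct.lid K g (LinearMap.rTensor g (coeffL σ)
          (LinearMap.rTensor g Φl (η x)))) := by
    rw [G3, interchange1 (coeffL σ) (LinearMap.rTensor g Φl ∘ₗ η.toLinearMap)]
  rw [hL, hR] at happ
  rw [mem_lieGrade]
  exact happ.symm

/-- Every element of `g` lies in the (internal direct) sum of the homogeneous components. -/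
theorem span_lieGrade (hcoact : IsLieCoaction K g B η)
    (Φ : BialgHomToGroupAlgebra K G B) (x : g) :
    x ∈ ⨆ σ : G, lieGrade η Φ.toAlgHom σ := by
  classical
  set M := MonoidAlgebra K G
  set Φl := Φ.toAlgHom.toLinearMap with hΦl
  have hcounit : groupCounit K G ∘ₗ Φl = Coalgebra.counit (R := K) (A := B) :=
    LinearMap.ext Φ.counit_comp
  have hx : x = TensorProduct.lid K g (LinearMap.rTensor g (groupCounit K G)
      (LinearMap.rTensor g Φl (η x))) := by
    have e1 : LinearMap.rTensor g (groupCounit K G) (LinearMap.rTensor g Φl (η x)) =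
        LinearMap.rTensor g (Coalgebra.counit (R := K) (A := B)) (η x) := by
      rw [← hcounit, LinearMap.rTensor_comp]; rfl
    rw [e1, hcoact.1 x]
  have h1 : ∀ (τ : G) (a : K), groupCounit K G (MonoidAlgebra.single τ a) = a := by
    intro τ a
    rw [show (groupCounit K G (MonoidAlgebra.single τ a)) =
      (MonoidAlgebra.lift K K G 1) (MonoidAlgebra.single τ a) from rfl,
      MonoidAlgebra.lift_single]
    simp
  have hcsum : ∀ c : MonoidAlgebra K G, groupCounit K G c = c.coeff.sum fun _ a => a := by
    intro c
    induction c using MonoidAlgebra.induction_linear with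
    | zero => simp
    | add f h hf hh =>
      rw [map_add, hf, hh, MonoidAlgebra.coeff_add,
        Finsupp.sum_add_index' (fun _ => rfl) (fun _ _ _ => rfl)]
    | single τ a =>
      rw [h1 τ a, MonoidAlgebra.coeff_single, Finsupp.sum_single_index rfl]
  have fin : ∀ t : M ⊗[K] g, ∃ s : Finset G,
      (∀ σ ∉ s, TensorProduct.lid K g (LinearMap.rTensor g (coeffL σ) t) = 0) ∧
        TensorProduct.lid K g (LinearMap.rTensor g (groupCounit K G) t) =
          ∑ σ ∈ s, TensorProduct.lid K g (LinearMap.rTensor g (coeffL σ) t) := by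
    intro t
    induction t using TensorProduct.induction_on with
    | zero => exact ⟨∅, by simp, by simp⟩
    | tmul c y =>
      refine ⟨c.coeff.support, ?_, ?_⟩
      · intro σ hσ
        rw [LinearMap.rTensor_tmul, TensorProduct.lid_tmul,
          show coeffL σ c = c.coeff σ from rfl, Finsupp.notMem_support_iff.mp hσ, zero_smul]
      · rw [LinearMap.rTensor_tmul, TensorProduct.lid_tmul, hcsum c,
          show (Finsupp.sum c.coeff fun _ a => a) = ∑ σ ∈ c.coeff.support, c.coeff σ from rfl,
          Finset.sum_smul]
        refine Finset.sum_congr rfl fun σ _ => ?_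
        rw [LinearMap.rTensor_tmul, TensorProduct.lid_tmul]
        rfl
    | add t₁ t₂ h₁ h₂ =>
      obtain ⟨s₁, hv₁, hs₁⟩ := h₁
      obtain ⟨s₂, hv₂, hs₂⟩ := h₂
      refine ⟨s₁ ∪ s₂, ?_, ?_⟩
      · intro σ hσ
        rw [map_add, map_add, hv₁ σ (fun h => hσ (Finset.mem_union_left _ h)),
          hv₂ σ (fun h => hσ (Finset.mem_union_right _ h)), add_zero]
      · rw [map_add, map_add, hs₁, hs₂,
          Finset.sum_subset Finset.subset_union_left (fun σ _ hσ => hv₁ σ hσ),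
          Finset.sum_subset Finset.subset_union_right (fun σ _ hσ => hv₂ σ hσ),
          ← Finset.sum_add_distrib]
        refine Finset.sum_congr rfl fun σ _ => ?_
        rw [map_add, map_add]
  obtain ⟨s, hv, hs⟩ := fin (LinearMap.rTensor g Φl (η x))
  rw [hx, hs]
  refine Submodule.sum_mem _ fun σ _ => ?_
  exact Submodule.mem_iSup_of_mem σ (component_mem η hcoact.2 Φ σ x)

end Grading


section Equiv

variable {B : Type u} [CommRing B] [Bialgebra K B]

/-- The Lie algebra automorphism of `g` induced by a pair of mutually inverse functionals. -/
noncomputable def psiLieEquiv (η : g →ₗ⁅K⁆ B ⊗[K] g) (u v : B →ₐ[K] K)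
    (hvu : ∀ x, psiMap η u.toLinearMap (psiMap η v.toLinearMap x) = x)
    (huv : ∀ x, psiMap η v.toLinearMap (psiMap η u.toLinearMap x) = x) : g ≃ₗ⁅K⁆ g :=
  { lidLieHom.comp ((rTensorLieHom v).comp η) with
    invFun := psiMap η u.toLinearMap
    left_inv := hvu
    right_inv := huv }

theorem psiLieEquiv_coe (η : g →ₗ⁅K⁆ B ⊗[K] g) (u v : B →ₐ[K] K)
    (hvu : ∀ x, psiMap η u.toLinearMap (psiMap η v.toLinearMap x) = x)
    (huv : ∀ x, psiMap η v.toLinearMap (psiMap η u.toLinearMap x) = x) :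
    ((psiLieEquiv η u v hvu huv : g →ₗ⁅K⁆ g) : g →ₗ[K] g) = psiMap η v.toLinearMap := rfl

end Equiv

end Statement11Aux

open Statement11Aux

theorem gradings_isomorphic_iff_conjugate
    (K : Type u) [Field K] [CharZero K]
    (G : Type u) [CommGroup G]
    (g : Type u) [LieRing g] [LieAlgebra K g] [FiniteDimensional K g]
    (B : Type u) [CommRing B] [Bialgebra K B]
    (η : g →ₗ⁅K⁆ B ⊗[K] g)
    (hcoact : IsLieCoaction K g B η)
    (huniv : IsUniversalLiePair K g g B η)
    (Φ Φ' : BialgHomToGroupAlgebra K G B) :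
    (∃ φ : g ≃ₗ⁅K⁆ g, ∀ σ : G,
      Submodule.map (φ : g →ₗ⁅K⁆ g).toLinearMap (lieGrade η Φ.toAlgHom σ)
        = lieGrade η Φ'.toAlgHom σ) ↔
    (∃ u v : B →ₐ[K] K,
      (∀ b : B, conv u v b = Bialgebra.counitAlgHom K B b) ∧
      (∀ b : B, conv v u b = Bialgebra.counitAlgHom K B b) ∧
      ∀ b : B, Φ'.toAlgHom b = conjugateMap u v Φ.toAlgHom b) := by
  classical
  constructor
  · rintro ⟨φ, hφ⟩
    obtain ⟨u, hu, -⟩ := huniv K (oneTmulLie.comp φ.symm.toLieHom)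
    obtain ⟨v, hv, -⟩ := huniv K (oneTmulLie.comp φ.toLieHom)
    have hψu : ∀ x, psiMap η u.toLinearMap x = φ.symm x := by
      intro x
      rw [psiMap_apply, ← hu x]
      simp
    have hψv : ∀ x, psiMap η v.toLinearMap x = φ x := by
      intro x
      rw [psiMap_apply, ← hv x]
      simp
    have hlin_v : psiMap η v.toLinearMap = (φ : g →ₗ⁅K⁆ g).toLinearMap := by
      apply LinearMap.ext
      intro x
      rw [hψv x]
      rfl
    have hcuv : ∀ b : B, conv u v b = Bialgebra.counitAlgHom K B b := by
      have hc : convAlgHom u v = Bialgebra.counitAlgHom K B := by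
        apply univ_alghom_ext η huniv
        intro x
        apply (TensorProduct.lid K g).injective
        have e1 : (convAlgHom u v).toLinearMap = conv u v :=
          LinearMap.ext (convAlgHom_apply u v)
        rw [e1, conv_eta η hcoact.2 u v x, hψu x, hψv (φ.symm x),
          show (Bialgebra.counitAlgHom K B).toLinearMap =
            Coalgebra.counit (R := K) (A := B) from rfl, hcoact.1 x]
        exact φ.apply_symm_apply x
      intro b
      rw [← convAlgHom_apply u v b, hc]
    have hcvu : ∀ b : B, conv v u b = Bialgebra.counitAlgHom K B b := by
      have hc : convAlgHom v u = Bialgebra.counitAlgHom K B := by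
        apply univ_alghom_ext η huniv
        intro x
        apply (TensorProduct.lid K g).injective
        have e1 : (convAlgHom v u).toLinearMap = conv v u :=
          LinearMap.ext (convAlgHom_apply v u)
        rw [e1, conv_eta η hcoact.2 v u x, hψv x, hψu (φ x),
          show (Bialgebra.counitAlgHom K B).toLinearMap =
            Coalgebra.counit (R := K) (A := B) from rfl, hcoact.1 x]
        exact φ.symm_apply_apply x
      intro b
      rw [← convAlgHom_apply v u b, hc]
    have hbridge : ∀ y : g,
        LinearMap.rTensor g Φ'.toAlgHom.toLinearMap
            (η ((φ : g →ₗ⁅K⁆ g).toLinearMap y)) =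
          LinearMap.lTensor (MonoidAlgebra K G) (φ : g →ₗ⁅K⁆ g).toLinearMap
            (LinearMap.rTensor g Φ.toAlgHom.toLinearMap (η y)) := by
      intro y
      refine Submodule.iSup_induction (motive := fun w =>
          LinearMap.rTensor g Φ'.toAlgHom.toLinearMap
              (η ((φ : g →ₗ⁅K⁆ g).toLinearMap w)) =
            LinearMap.lTensor (MonoidAlgebra K G) (φ : g →ₗ⁅K⁆ g).toLinearMap
              (LinearMap.rTensor g Φ.toAlgHom.toLinearMap (η w)))
        _ (span_lieGrade η hcoact Φ y) ?_ ?_ ?_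
      · intro σ z hz
        have hz' : (φ : g →ₗ⁅K⁆ g).toLinearMap z ∈ lieGrade η Φ'.toAlgHom σ := by
          rw [← hφ σ]
          exact Submodule.mem_map_of_mem hz
        rw [mem_lieGrade] at hz hz'
        rw [hz', hz, LinearMap.lTensor_tmul]
      · simp
      · intro a b ha hb
        simp only [map_add, ha, hb]
    have hconj : Φ'.toAlgHom = conjAlgHom u v Φ.toAlgHom := by
      apply univ_alghom_ext η huniv
      intro x
      have e2 : (conjAlgHom u v Φ.toAlgHom).toLinearMap = conjugateMap u v Φ.toAlgHom :=
        LinearMap.ext (conjAlgHom_apply u v Φ.toAlgHom)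
      rw [e2, conj_eta η hcoact.2 u v Φ.toAlgHom x, hψu x, hlin_v]
      have hxx : (φ : g →ₗ⁅K⁆ g).toLinearMap (φ.symm x) = x := φ.apply_symm_apply x
      have hb := hbridge (φ.symm x)
      rw [hxx] at hb
      exact hb
    refine ⟨u, v, hcuv, hcvu, fun b => ?_⟩
    rw [hconj]
    exact conjAlgHom_apply u v Φ.toAlgHom b
  · rintro ⟨u, v, h1, h2, h3⟩
    have hcv : (conv u v : B →ₗ[K] K) = Coalgebra.counit (R := K) (A := B) := by
      apply LinearMap.ext
      intro b
      rw [h1 b]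
      rfl
    have hcv' : (conv v u : B →ₗ[K] K) = Coalgebra.counit (R := K) (A := B) := by
      apply LinearMap.ext
      intro b
      rw [h2 b]
      rfl
    have huv : ∀ x, psiMap η v.toLinearMap (psiMap η u.toLinearMap x) = x := by
      intro x
      have hc := conv_eta η hcoact.2 u v x
      rw [hcv] at hc
      rw [← hc]
      exact hcoact.1 x
    have hvu : ∀ x, psiMap η u.toLinearMap (psiMap η v.toLinearMap x) = x := by
      intro x
      have hc := conv_eta η hcoact.2 v u x
      rw [hcv'] at hc
      rw [← hc]
      exact hcoact.1 x
    have hρ' : ∀ x : g, LinearMap.rTensor g Φ'.toAlgHom.toLinearMap (η x) =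
        LinearMap.lTensor (MonoidAlgebra K G) (psiMap η v.toLinearMap)
          (LinearMap.rTensor g Φ.toAlgHom.toLinearMap
            (η (psiMap η u.toLinearMap x))) := by
      intro x
      have e : Φ'.toAlgHom.toLinearMap = conjugateMap u v Φ.toAlgHom := LinearMap.ext h3
      rw [e]
      exact conj_eta η hcoact.2 u v Φ.toAlgHom x
    refine ⟨psiLieEquiv η u v hvu huv, fun σ => ?_⟩
    ext y
    simp only [Submodule.mem_map]
    constructor
    · rintro ⟨z, hz, rfl⟩
      rw [mem_lieGrade] at hz ⊢
      show LinearMap.rTensor g Φ'.toAlgHom.toLinearMap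
          (η (psiMap η v.toLinearMap z)) = _ ⊗ₜ[K] _
      rw [hρ' (psiMap η v.toLinearMap z), hvu z, hz, LinearMap.lTensor_tmul]
      rfl
    · intro hy
      rw [mem_lieGrade] at hy
      refine ⟨psiMap η u.toLinearMap y, ?_, huv y⟩
      rw [mem_lieGrade]
      have h5 := (hρ' y).symm.trans hy
      have h6 : ∀ t : MonoidAlgebra K G ⊗[K] g,
          LinearMap.lTensor (MonoidAlgebra K G) (psiMap η u.toLinearMap)
            (LinearMap.lTensor (MonoidAlgebra K G) (psiMap η v.toLinearMap) t) = t := by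
        intro t
        rw [← LinearMap.lTensor_comp_apply,
          show psiMap η u.toLinearMap ∘ₗ psiMap η v.toLinearMap = LinearMap.id from
            LinearMap.ext hvu, LinearMap.lTensor_id]
        rfl
      have h7 := congrArg
        (LinearMap.lTensor (MonoidAlgebra K G) (psiMap η u.toLinearMap)) h5
      rw [h6, LinearMap.lTensor_tmul] at h7
      exact h7
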